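/- Define I_n(x) := \frac{(1-x)^n}{n} \sum_{j=0}^{n-1} (n-j) \binom{n-1+j}{j} x^j for x ∈ (0,1/2) and n ≥ 1. Then for all n ≥ 1, I_{n+1}(x) - I_n(x) = - x^{n+1} (1-x)^n \frac{1}{n+1}\binom{2n}{n}. -/

import Mathlib

theorem stmt_6 (x : ℝ) (hx : x ∈ Set.Ioo (0:ℝ) (1/2)) (n : ℕ) (hn : 1 ≤ n)
    (I : ℕ → ℝ)
    (hI : ∀ d, 1 ≤ d → I d = (1 - x) ^ d / (d : ℝ) *
        ∑ j ∈ Finset.range d, ((d - j : ℕ) : ℝ) * ((d - 1 + j).choose j : ℝ) * x ^ j) :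
    I (n + 1) - I n = -(x ^ (n + 1) * (1 - x) ^ n * ((2 * n).choose n : ℝ) / ((n : ℝ) + 1)) := by
  have hn0 : (n:ℝ) ≠ 0 := Nat.cast_ne_zero.mpr (by omega)
  have hn1 : (n:ℝ) + 1 ≠ 0 := by positivity
  set u : ℕ → ℝ := fun j => (n:ℝ) * ((n+1-j : ℕ):ℝ) * ((n+j).choose j : ℝ) with hu
  set v : ℕ → ℝ := fun j => ((n:ℝ)+1) * ((n-j : ℕ):ℝ) * ((n-1+j).choose j : ℝ) with hv
  have hstep : ∀ j, j < n → u (j+1) = u j + v (j+1) := by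
    intro j hj
    have h1 : ((n+j).choose (j+1) : ℝ) * (j+1) = ((n+j).choose j : ℝ) * n := by
      have := Nat.choose_succ_right_eq (n+j) j
      have h' : (n+j).choose (j+1) * (j+1) = (n+j).choose j * n := by
        rw [this]; congr 1; omega
      exact_mod_cast h'
    have h2 : ((n+(j+1)).choose (j+1) : ℝ)
        = ((n+j).choose j : ℝ) + ((n+j).choose (j+1) : ℝ) := by
      have : (n+(j+1)).choose (j+1) = (n+j).choose j + (n+j).choose (j+1) := by
        have := Nat.choose_succ_succ (n+j) j
        rw [show n+(j+1) = (n+j)+1 by omega, this]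
      exact_mod_cast this
    simp only [hu, hv]
    rw [show n+1-(j+1) = n-j by omega, show n-1+(j+1) = n+j by omega]
    rw [Nat.cast_sub hj.le, Nat.cast_sub hj, Nat.cast_sub (show j ≤ n+1 by omega)]
    push_cast
    rw [h2]
    linear_combination h1
  have hu0 : u 0 = v 0 := by
    simp only [hu, hv]
    simp [Nat.choose_zero_right]
    push_cast
    ring
  have hvn : v n = 0 := by simp [hv]
  have hD : ∑ j ∈ Finset.range (n+1), u j * x^j - x * ∑ j ∈ Finset.range (n+1), u j * x^j
      = ∑ j ∈ Finset.range n, v j * x^j - u n * x^(n+1) := by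
    have h1 : ∑ j ∈ Finset.range (n+1), u j * x^j
        = (∑ j ∈ Finset.range n, u (j+1) * x^(j+1)) + u 0 := by
      rw [Finset.sum_range_succ' (fun j => u j * x^j) n]; simp
    have h2 : x * ∑ j ∈ Finset.range (n+1), u j * x^j
        = (∑ j ∈ Finset.range n, u j * x^(j+1)) + u n * x^(n+1) := by
      rw [Finset.mul_sum]
      rw [show (∑ j ∈ Finset.range (n+1), x * (u j * x^j))
          = ∑ j ∈ Finset.range (n+1), u j * x^(j+1) by
        refine Finset.sum_congr rfl fun j _ => by ring]
      rw [Finset.sum_range_succ]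
    rw [h2, h1]
    have h3 : (∑ j ∈ Finset.range n, u (j+1) * x^(j+1))
        - (∑ j ∈ Finset.range n, u j * x^(j+1))
        = ∑ j ∈ Finset.range n, v (j+1) * x^(j+1) := by
      rw [← Finset.sum_sub_distrib]
      refine Finset.sum_congr rfl fun j hj => ?_
      rw [hstep j (Finset.mem_range.mp hj)]; ring
    have h4 : ∑ j ∈ Finset.range n, v j * x^j
        = (∑ j ∈ Finset.range n, v (j+1) * x^(j+1)) + v 0 := by
      rw [show (∑ j ∈ Finset.range n, v j * x^j)
          = ∑ j ∈ Finset.range (n+1), v j * x^j by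
        rw [Finset.sum_range_succ, hvn]; ring]
      rw [Finset.sum_range_succ' (fun j => v j * x^j) n]; simp
    rw [h4, ← h3, hu0]; ring
  have hun : u n = (n:ℝ) * ((2*n).choose n : ℝ) := by
    simp only [hu]
    rw [show n+1-n = 1 by omega, show n+n = 2*n by omega]
    push_cast; ring
  rw [hI (n+1) (by omega), hI n hn]
  have hA : ∑ j ∈ Finset.range (n+1), u j * x^j
      = (n:ℝ) * ∑ j ∈ Finset.range (n+1),
          ((n+1-j : ℕ):ℝ) * ((n+1-1+j).choose j : ℝ) * x^j := by
    rw [Finset.mul_sum]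
    refine Finset.sum_congr rfl fun j _ => ?_
    simp only [hu, Nat.add_sub_cancel]; ring
  have hB : ∑ j ∈ Finset.range n, v j * x^j
      = ((n:ℝ)+1) * ∑ j ∈ Finset.range n,
          ((n-j : ℕ):ℝ) * ((n-1+j).choose j : ℝ) * x^j := by
    rw [Finset.mul_sum]
    refine Finset.sum_congr rfl fun j _ => ?_
    simp only [hv]; ring
  rw [hA, hB, hun] at hD
  push_cast at hD ⊢
  field_simp
  linear_combination ((1-x)^n) * hD
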